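/- Let G = (g, [·,…,·], ε, α) be a multiplicative n-Hom-Lie color algebra and p ≥ 0. Then the p-th derived algebra G^p = (g, α^{2^p − 1}∘[·,…,·], ε, α^{2^p}) is again an n-Hom-Lie color algebra. -/

import Mathlib

open scoped BigOperators

/-- The axioms of an `n`-Hom-Lie color algebra (arity `n = m+1`). -/
structure IsNHomLieColor (K : Type*) {Γ V : Type*} [Field K] [AddCommGroup Γ]
    [AddCommGroup V] [Module K V]
    (m : ℕ) (grading : Γ → Submodule K V) (ε : Γ → Γ → K)
    (bracket : MultilinearMap K (fun _ : Fin (m+1) => V) V) (α : V →ₗ[K] V) : Prop where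
  eps_ne_zero : ∀ a b, ε a b ≠ 0
  eps_symm : ∀ a b, ε a b * ε b a = 1
  eps_add_right : ∀ a b c, ε a (b + c) = ε a b * ε a c
  eps_add_left : ∀ a b c, ε (a + b) c = ε a c * ε b c
  alpha_deg : ∀ γ : Γ, ∀ v ∈ grading γ, α v ∈ grading γ
  bracket_deg : ∀ (d : Fin (m+1) → Γ) (x : Fin (m+1) → V),
      (∀ i, x i ∈ grading (d i)) → bracket x ∈ grading (∑ i, d i)
  skew : ∀ (d : Fin (m+1) → Γ) (x : Fin (m+1) → V), (∀ i, x i ∈ grading (d i)) →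
      ∀ i j : Fin (m+1), (i : ℕ) + 1 = (j : ℕ) →
      bracket x = -(ε (d i) (d j)) • bracket (x ∘ Equiv.swap i j)
  jacobi : ∀ (dx : Fin m → Γ) (dy : Fin (m+1) → Γ) (x : Fin m → V) (y : Fin (m+1) → V),
      (∀ i, x i ∈ grading (dx i)) → (∀ i, y i ∈ grading (dy i)) →
      bracket (Fin.snoc (fun i => α (x i)) (bracket y)) =
        ∑ i : Fin (m+1),
          ε (∑ j, dx j) (∑ j ∈ Finset.univ.filter (fun j => j < i), dy j) •
            bracket (Function.update (fun j => α (y j)) i (bracket (Fin.snoc x (y i))))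

/-- If `G = (g,[·,…,·],ε,α)` is a multiplicative `n`-Hom-Lie color algebra and
`p ≥ 0`, the `p`-th derived algebra `G^p = (g, α^{2^p-1}∘[·,…,·], ε, α^{2^p})`
is again an `n`-Hom-Lie color algebra. -/
theorem derived_nHomLieColor
    {K Γ V : Type*} [Field K] [AddCommGroup Γ] [AddCommGroup V] [Module K V]
    (m : ℕ) (grading : Γ → Submodule K V) (ε : Γ → Γ → K)
    (bracket : MultilinearMap K (fun _ : Fin (m+1) => V) V) (α : Module.End K V)
    (h : IsNHomLieColor K m grading ε bracket α)
    (hmult : ∀ x : Fin (m+1) → V, α (bracket x) = bracket (fun i => α (x i)))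
    (p : ℕ) :
    IsNHomLieColor K m grading ε
      ((α ^ (2 ^ p - 1)).compMultilinearMap bracket) (α ^ (2 ^ p)) := by
  set q := 2 ^ p - 1 with hq
  have h2 : 2 ^ p = q + 1 := (Nat.sub_add_cancel Nat.one_le_two_pow).symm
  have hmultk : ∀ (k : ℕ) (x : Fin (m+1) → V),
      (α ^ k) (bracket x) = bracket (fun i => (α ^ k) (x i)) := by
    intro k
    induction k with
    | zero => intro x; simp
    | succ k ih =>
      intro x
      rw [pow_succ', Module.End.mul_apply, ih, hmult]
      simp [pow_succ', Module.End.mul_apply]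
  have hdeg : ∀ (k : ℕ) (γ : Γ) (v : V), v ∈ grading γ → (α ^ k) v ∈ grading γ := by
    intro k
    induction k with
    | zero => intro γ v hv; simpa using hv
    | succ k ih =>
      intro γ v hv
      rw [pow_succ', Module.End.mul_apply]
      exact h.alpha_deg γ _ (ih γ v hv)
  have hsnoc : ∀ (z : Fin m → V) (w : V),
      (fun j => (α ^ q) ((Fin.snoc z w : Fin (m+1) → V) j)) = Fin.snoc (fun i => (α ^ q) (z i)) ((α ^ q) w) := by
    intro z w
    funext j
    exact congrFun (Fin.comp_snoc (⇑(α ^ q)) z w) j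
  refine ⟨h.eps_ne_zero, h.eps_symm, h.eps_add_right, h.eps_add_left, ?_, ?_, ?_, ?_⟩
  · intro γ v hv; exact hdeg _ γ v hv
  · intro d x hx
    exact hdeg q _ _ (h.bracket_deg d x hx)
  · intro d x hx i j hij
    simp only [LinearMap.compMultilinearMap_apply]
    rw [h.skew d x hx i j hij, map_smul]
  · intro dx dy x y hx hy
    simp only [LinearMap.compMultilinearMap_apply]
    have hx' : ∀ i, (α ^ q) (x i) ∈ grading (dx i) := fun i => hdeg q _ _ (hx i)
    have hy' : ∀ i, (α ^ q) (y i) ∈ grading (dy i) := fun i => hdeg q _ _ (hy i)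
    have hj := h.jacobi dx dy (fun i => (α ^ q) (x i)) (fun i => (α ^ q) (y i)) hx' hy'
    have e1 : (Fin.snoc (fun i => (α ^ 2 ^ p) (x i)) ((α ^ q) (bracket y)) : Fin (m+1) → V)
        = Fin.snoc (fun i => α ((α ^ q) (x i))) (bracket fun i => (α ^ q) (y i)) := by
      have hxx : (fun i => (α ^ 2 ^ p) (x i)) = fun i => α ((α ^ q) (x i)) := by
        funext i; rw [h2, pow_succ', Module.End.mul_apply]
      rw [hxx, hmultk]
    have e2 : ∀ i : Fin (m+1),
        Function.update (fun j => α ((α ^ q) (y j))) i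
            (bracket (Fin.snoc (fun i => (α ^ q) (x i)) ((α ^ q) (y i))))
        = Function.update (fun j => (α ^ 2 ^ p) (y j)) i ((α ^ q) (bracket (Fin.snoc x (y i)))) := by
      intro i
      have hyy : (fun j => α ((α ^ q) (y j))) = fun j => (α ^ 2 ^ p) (y j) := by
        funext j; rw [h2, pow_succ', Module.End.mul_apply]
      rw [hyy, hmultk, hsnoc]
    rw [e1, hj, map_sum]
    refine Finset.sum_congr rfl fun i _ => ?_
    rw [map_smul, e2]
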